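/- Assume δ ≤ θ ≤ α. Then there exist constants C > 0 and c > 0 (depending only on n, δ, α, θ, σ, ε) such that for all t ≥ 0, ∫_{{ξ : |ξ| ≥ ε}} E₁(t,ξ) dξ ≤ C·e^{−ct}·( ∫_{ℝⁿ}(1+|ξ|²)^{δ+σ/2}|v̂₁(ξ)|² dξ + ∫_{ℝⁿ}(1+|ξ|²)^{α+σ/2}|v̂₀(ξ)|² dξ ). -/

import Mathlib

open Set ENNReal

lemma key_ineq (a b k c0 c1 P U Q : ℝ)
    (ha : 1 ≤ a) (hb : 0 < b) (hk : 0 < k)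
    (hc0 : 0 < c0) (hc0' : c0 ≤ 1) (hc1 : 0 < c1) (hc1' : c1 ≤ 1)
    (hab : c0 * a ≤ b) (hbk : c1 * b ≤ k)
    (hP : 0 ≤ P) (hU : 0 ≤ U)
    (hm : 0 ≤ b * b * P + 2 * (b * k) * Q + k * k * U) :
    -b * P + (c0 * c1 / 4) * a * P - (c0 * c1 / 4) * b * Q - (c0 * c1 / 4) * k * U ≤
      -(c0 * c1 / 8) * (a / 2 * P + k / 2 * U + (c0 * c1 / 4) * a * Q) := by
  set g := c0 * c1 / 4 with hg
  have hg0 : 0 < g := by positivity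
  have hga : g * a ≤ b / 4 := by nlinarith
  have hgb : g * b ≤ k / 4 := by nlinarith
  have hμ0 : 0 ≤ g * (b - g * a / 2) := by nlinarith
  have t1 : 0 ≤ (g * (b - g * a / 2)) * (b * b * P + 2 * (b * k) * Q + k * k * U) :=
    mul_nonneg hμ0 hm
  have t2 : 0 ≤ (b / 4 - g * a) * (b * k * P) := by
    apply mul_nonneg (by linarith) (by positivity)
  have t3 : 0 ≤ (k / 4 - g * b) * (b * b * P) := by
    apply mul_nonneg (by linarith) (by positivity)
  have t5 : 0 ≤ g * g * a * b * b * P / 2 := by positivity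
  have t6 : 0 ≤ b * b * k * P := by positivity
  have t7 : 0 ≤ g * b * k * k * U := by positivity
  have t8 : 0 ≤ g * g * a * k * k * U := by positivity
  have hbk0 : 0 < 2 * b * k := by positivity
  rw [← sub_nonneg]
  have key : 0 ≤ (2 * b * k) * ((-(c0 * c1 / 8) * (a / 2 * P + k / 2 * U + g * a * Q)) -
      (-b * P + g * a * P - g * b * Q - g * k * U)) := by
    have : (2 * b * k) * ((-(c0 * c1 / 8) * (a / 2 * P + k / 2 * U + g * a * Q)) -
      (-b * P + g * a * P - g * b * Q - g * k * U)) =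
      (g * (b - g * a / 2)) * (b * b * P + 2 * (b * k) * Q + k * k * U)
      + (5/2) * ((b / 4 - g * a) * (b * k * P)) + (k / 4 - g * b) * (b * b * P)
      + g * g * a * b * b * P / 2 + (9/8) * (b * b * k * P)
      + (1/2) * (g * b * k * k * U) + (1/2) * (g * g * a * k * k * U) := by
      rw [hg]; ring
    rw [this]; linarith
  exact le_of_mul_le_mul_left (by linarith [key]) hbk0

set_option maxHeartbeats 1000000 in
lemma aux_decay (a b k c0 c1 : ℝ)
    (ha : 1 ≤ a) (hb : 0 < b) (hk : 0 < k)
    (hc0 : 0 < c0) (hc0' : c0 ≤ 1) (hc1 : 0 < c1) (hc1' : c1 ≤ 1)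
    (hab : c0 * a ≤ b) (hbk : c1 * b ≤ k)
    (x x' x'' y y' y'' : ℝ → ℝ)
    (hx1 : ∀ t ∈ Ici (0:ℝ), HasDerivWithinAt x (x' t) (Ici 0) t)
    (hx2 : ∀ t ∈ Ici (0:ℝ), HasDerivWithinAt x' (x'' t) (Ici 0) t)
    (hy1 : ∀ t ∈ Ici (0:ℝ), HasDerivWithinAt y (y' t) (Ici 0) t)
    (hy2 : ∀ t ∈ Ici (0:ℝ), HasDerivWithinAt y' (y'' t) (Ici 0) t)
    (heqx : ∀ t ∈ Ici (0:ℝ), a * x'' t + b * x' t + k * x t = 0)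
    (heqy : ∀ t ∈ Ici (0:ℝ), a * y'' t + b * y' t + k * y t = 0)
    (t : ℝ) (ht : 0 ≤ t) :
    a / 2 * (x' t * x' t + y' t * y' t) + k / 2 * (x t * x t + y t * y t) ≤
      2 * Real.exp (-(c0 * c1 / 8) * t) *
        (a / 2 * (x' 0 * x' 0 + y' 0 * y' 0) + k / 2 * (x 0 * x 0 + y 0 * y 0)) := by
  have hg0 : (0:ℝ) < c0 * c1 / 4 := by positivity
  have hga : c0 * c1 / 4 * a ≤ k / 4 := by nlinarith
  have hg14 : c0 * c1 / 4 ≤ (1:ℝ) / 4 := by nlinarith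
  obtain ⟨g, hgdef⟩ : ∃ g : ℝ, g = c0 * c1 / 4 := ⟨_, rfl⟩
  obtain ⟨c, hcdef⟩ : ∃ c : ℝ, c = c0 * c1 / 8 := ⟨_, rfl⟩
  rw [← hgdef] at hg0 hga hg14
  have hc : 0 < c := by rw [hcdef]; positivity
  obtain ⟨F, hF⟩ : ∃ F : ℝ → ℝ, F = fun s => a / 2 * (x' s * x' s + y' s * y' s)
      + k / 2 * (x s * x s + y s * y s) + g * a * (x' s * x s + y' s * y s) := ⟨_, rfl⟩
  obtain ⟨E, hE⟩ : ∃ E : ℝ → ℝ, E = fun s => a / 2 * (x' s * x' s + y' s * y' s)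
      + k / 2 * (x s * x s + y s * y s) := ⟨_, rfl⟩
  -- comparison of F and E
  have hcomp : ∀ s : ℝ, 3 / 4 * E s ≤ F s ∧ F s ≤ 5 / 4 * E s := by
    intro s
    have s1 : 0 ≤ g * a / 2 * ((x' s + x s) ^ 2 + (y' s + y s) ^ 2) := by positivity
    have s1' : 0 ≤ g * a / 2 * ((x' s - x s) ^ 2 + (y' s - y s) ^ 2) := by positivity
    have s2 : 0 ≤ (1 / 4 - g) * (a / 2) * (x' s * x' s + y' s * y' s) := by
      apply mul_nonneg (mul_nonneg (by linarith) (by linarith)) (by nlinarith [sq_nonneg (x' s), sq_nonneg (y' s)])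
    have s3 : 0 ≤ (k / 4 - g * a) / 2 * (x s * x s + y s * y s) := by
      apply mul_nonneg (by linarith) (by nlinarith [sq_nonneg (x s), sq_nonneg (y s)])
    constructor
    · have hid : F s - 3 / 4 * E s = g * a / 2 * ((x' s + x s) ^ 2 + (y' s + y s) ^ 2)
          + (1 / 4 - g) * (a / 2) * (x' s * x' s + y' s * y' s)
          + (k / 4 - g * a) / 2 * (x s * x s + y s * y s) := by
        simp only [hE, hF]; ring
      linarith [hid, s1, s2, s3]
    · have hid : 5 / 4 * E s - F s = g * a / 2 * ((x' s - x s) ^ 2 + (y' s - y s) ^ 2)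
          + (1 / 4 - g) * (a / 2) * (x' s * x' s + y' s * y' s)
          + (k / 4 - g * a) / 2 * (x s * x s + y s * y s) := by
        simp only [hE, hF]; ring
      linarith [hid, s1', s2, s3]
  have hE0 : ∀ s : ℝ, 0 ≤ E s := by
    intro s
    simp only [hE]
    have := sq_nonneg (x s); have := sq_nonneg (y s)
    have := sq_nonneg (x' s); have := sq_nonneg (y' s)
    nlinarith
  -- derivative of F
  obtain ⟨DF, hDF⟩ : ∃ DF : ℝ → ℝ, DF = fun s => -b * (x' s * x' s + y' s * y' s)
      + g * a * (x' s * x' s + y' s * y' s)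
      - g * b * (x' s * x s + y' s * y s) - g * k * (x s * x s + y s * y s) := ⟨_, rfl⟩
  have hFd : ∀ s ∈ Ici (0:ℝ), HasDerivWithinAt F (DF s) (Ici 0) s := by
    intro s hs
    rw [hF, hDF]
    have h1 := hx1 s hs; have h2 := hx2 s hs
    have h3 := hy1 s hs; have h4 := hy2 s hs
    have hraw : HasDerivWithinAt (fun s => a / 2 * (x' s * x' s + y' s * y' s)
        + k / 2 * (x s * x s + y s * y s) + g * a * (x' s * x s + y' s * y s))
        (a / 2 * (x'' s * x' s + x' s * x'' s + (y'' s * y' s + y' s * y'' s))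
          + k / 2 * (x' s * x s + x s * x' s + (y' s * y s + y s * y' s))
          + g * a * (x'' s * x s + x' s * x' s + (y'' s * y s + y' s * y' s))) (Ici 0) s := by
      exact ((((h2.mul h2).add (h4.mul h4)).const_mul (a/2)).add
        (((h1.mul h1).add (h3.mul h3)).const_mul (k/2))).add
        (((h2.mul h1).add (h4.mul h3)).const_mul (g*a))
    have ex := heqx s hs; have ey := heqy s hs
    have hval : a / 2 * (x'' s * x' s + x' s * x'' s + (y'' s * y' s + y' s * y'' s))
          + k / 2 * (x' s * x s + x s * x' s + (y' s * y s + y s * y' s))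
          + g * a * (x'' s * x s + x' s * x' s + (y'' s * y s + y' s * y' s))
        = -b * (x' s * x' s + y' s * y' s) + g * a * (x' s * x' s + y' s * y' s)
          - g * b * (x' s * x s + y' s * y s) - g * k * (x s * x s + y s * y s) := by
      linear_combination (x' s + g * x s) * ex + (y' s + g * y s) * ey
    rwa [hval] at hraw
  -- DF ≤ -c F
  have hDFle : ∀ s ∈ Ici (0:ℝ), DF s ≤ -c * F s := by
    intro s hs
    have hm : 0 ≤ b * b * (x' s * x' s + y' s * y' s)
        + 2 * (b * k) * (x' s * x s + y' s * y s) + k * k * (x s * x s + y s * y s) := by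
      nlinarith [sq_nonneg (b * x' s + k * x s), sq_nonneg (b * y' s + k * y s)]
    have hP : 0 ≤ x' s * x' s + y' s * y' s := by nlinarith [sq_nonneg (x' s), sq_nonneg (y' s)]
    have hU : 0 ≤ x s * x s + y s * y s := by nlinarith [sq_nonneg (x s), sq_nonneg (y s)]
    have := key_ineq a b k c0 c1 (x' s * x' s + y' s * y' s) (x s * x s + y s * y s)
      (x' s * x s + y' s * y s) ha hb hk hc0 hc0' hc1 hc1' hab hbk hP hU hm
    simp only [hDF, hF]
    rw [hgdef, hcdef]
    linarith [this]
  -- G := exp (c t) * F t is antitone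
  obtain ⟨G, hG⟩ : ∃ G : ℝ → ℝ, G = fun s => Real.exp (c * s) * F s := ⟨_, rfl⟩
  have hGd : ∀ s ∈ Ici (0:ℝ), HasDerivWithinAt G
      (Real.exp (c * s) * c * F s + Real.exp (c * s) * DF s) (Ici 0) s := by
    intro s hs
    rw [hG]
    have he : HasDerivAt (fun u => Real.exp (c * u)) (Real.exp (c * s) * c) s := by
      simpa using (((hasDerivAt_id s).const_mul c).exp)
    exact (he.hasDerivWithinAt).mul (hFd s hs)
  have hGanti : AntitoneOn G (Ici (0:ℝ)) := by
    apply antitoneOn_of_deriv_nonpos (convex_Ici 0)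
    · exact fun s hs => (hGd s hs).continuousWithinAt
    · intro s hs
      rw [interior_Ici] at hs
      exact (((hGd s (Set.mem_Ici.mpr (le_of_lt hs))).hasDerivAt (Ici_mem_nhds hs)).differentiableAt).differentiableWithinAt
    · intro s hs
      rw [interior_Ici] at hs
      rw [((hGd s (Set.mem_Ici.mpr (le_of_lt hs))).hasDerivAt (Ici_mem_nhds hs)).deriv]
      have h1 := hDFle s (Set.mem_Ici.mpr (le_of_lt hs))
      have h2 : Real.exp (c * s) * DF s ≤ Real.exp (c * s) * (-c * F s) :=
        mul_le_mul_of_nonneg_left h1 (Real.exp_nonneg _)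
      nlinarith [h2]
  have hGt : G t ≤ G 0 := hGanti (Set.mem_Ici.mpr (le_refl 0)) (Set.mem_Ici.mpr ht) ht
  have hG0 : G 0 = F 0 := by rw [hG]; simp
  have hexp : 0 < Real.exp (-c * t) := Real.exp_pos _
  have hFt : F t ≤ Real.exp (-c * t) * F 0 := by
    have h1 : Real.exp (c * t) * F t ≤ F 0 := by
      have h1' := hGt
      rw [hG] at h1'
      simpa using h1'
    have h2 : Real.exp (-c * t) * (Real.exp (c * t) * F t) ≤ Real.exp (-c * t) * F 0 :=
      mul_le_mul_of_nonneg_left h1 hexp.le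
    have h3 : Real.exp (-c * t) * (Real.exp (c * t) * F t) = F t := by
      rw [← mul_assoc, ← Real.exp_add]; norm_num
    linarith [h2, h3.symm.le, h3.le]
  have h34 := (hcomp t).1
  have h54 := (hcomp 0).2
  have hE00 := hE0 0
  have final : E t ≤ 2 * Real.exp (-c * t) * E 0 := by
    have h5 : Real.exp (-c * t) * F 0 ≤ Real.exp (-c * t) * (5 / 4 * E 0) :=
      mul_le_mul_of_nonneg_left h54 hexp.le
    have hm0 : 0 ≤ Real.exp (-c * t) * E 0 := mul_nonneg hexp.le hE00
    calc E t ≤ 4/3 * F t := by linarith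
    _ ≤ 4/3 * (Real.exp (-c * t) * F 0) := by linarith
    _ ≤ 4/3 * (Real.exp (-c * t) * (5/4 * E 0)) := by linarith
    _ = 5/3 * (Real.exp (-c * t) * E 0) := by ring
    _ ≤ 2 * (Real.exp (-c * t) * E 0) := by linarith
    _ = 2 * Real.exp (-c * t) * E 0 := by ring
  have : -(c0 * c1 / 8) * t = -c * t := by rw [hcdef]
  rw [this]
  rw [hE] at final
  exact final

open MeasureTheory

set_option maxHeartbeats 1600000 in
theorem stmt_12 (n : ℕ) (hn : 1 ≤ n) (δ α θ σ ε : ℝ)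
    (hδ : 0 ≤ δ) (hα : 0 ≤ α) (hθ0 : 0 ≤ θ) (hθα : θ ≤ α)
    (hε0 : 0 < ε) (hε1 : ε < 1)
    (v0 v1 : EuclideanSpace ℝ (Fin n) → ℂ)
    (w w' w'' : ℝ → EuclideanSpace ℝ (Fin n) → ℂ)
    (hmeas : ∀ t : ℝ, Measurable (w t) ∧ Measurable (w' t))
    (hd1 : ∀ ξ : EuclideanSpace ℝ (Fin n), ε ≤ ‖ξ‖ → ∀ t : ℝ, 0 ≤ t →
      HasDerivWithinAt (fun s => w s ξ) (w' t ξ) (Set.Ici 0) t)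
    (hd2 : ∀ ξ : EuclideanSpace ℝ (Fin n), ε ≤ ‖ξ‖ → ∀ t : ℝ, 0 ≤ t →
      HasDerivWithinAt (fun s => w' s ξ) (w'' t ξ) (Set.Ici 0) t)
    (hcont : ∀ ξ : EuclideanSpace ℝ (Fin n), ε ≤ ‖ξ‖ →
      ContinuousOn (fun t => w'' t ξ) (Set.Ici 0))
    (heq : ∀ ξ : EuclideanSpace ℝ (Fin n), ε ≤ ‖ξ‖ → ∀ t : ℝ, 0 ≤ t →
      ((1 + ‖ξ‖ ^ (2 * δ) : ℝ) : ℂ) * w'' t ξ + ((‖ξ‖ ^ (2 * θ) : ℝ) : ℂ) * w' t ξ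
        + ((‖ξ‖ ^ (2 * α) : ℝ) : ℂ) * w t ξ = 0)
    (hw0 : ∀ ξ : EuclideanSpace ℝ (Fin n), ε ≤ ‖ξ‖ → w 0 ξ = v0 ξ)
    (hw1 : ∀ ξ : EuclideanSpace ℝ (Fin n), ε ≤ ‖ξ‖ → w' 0 ξ = v1 ξ)
    (hδθ : δ ≤ θ) :
    ∃ C : ℝ, 0 < C ∧ ∃ c : ℝ, 0 < c ∧ ∀ t : ℝ, 0 ≤ t →
      (∫⁻ ξ in {ξ : EuclideanSpace ℝ (Fin n) | ε ≤ ‖ξ‖},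
          ENNReal.ofReal (1 / 2 * ‖ξ‖ ^ (2 * δ + σ) * ‖w' t ξ‖ ^ 2
            + 1 / 2 * ‖ξ‖ ^ (2 * α + σ) * ‖w t ξ‖ ^ 2))
        ≤ ENNReal.ofReal (C * Real.exp (-c * t)) *
          ((∫⁻ ξ : EuclideanSpace ℝ (Fin n),
              ENNReal.ofReal ((1 + ‖ξ‖ ^ 2) ^ (δ + σ / 2) * ‖v1 ξ‖ ^ 2))
            + ∫⁻ ξ : EuclideanSpace ℝ (Fin n),
              ENNReal.ofReal ((1 + ‖ξ‖ ^ 2) ^ (α + σ / 2) * ‖v0 ξ‖ ^ 2)) := by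
  obtain ⟨c0, hc0def⟩ : ∃ c0 : ℝ, c0 = min (1/2 : ℝ) (ε ^ (2*θ) / 2) := ⟨_, rfl⟩
  obtain ⟨c1, hc1def⟩ : ∃ c1 : ℝ, c1 = ε ^ (2*(α-θ)) := ⟨_, rfl⟩
  obtain ⟨Cs, hCsdef⟩ : ∃ Cs : ℝ, Cs = max (1:ℝ) ((ε^2/(1+ε^2)) ^ (σ/2)) := ⟨_, rfl⟩
  have hc0pos : 0 < c0 := by
    rw [hc0def]; apply lt_min (by norm_num)
    have := Real.rpow_pos_of_pos hε0 (2*θ); linarith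
  have hc0le : c0 ≤ 1 := by
    rw [hc0def]; calc min (1/2:ℝ) (ε ^ (2*θ)/2) ≤ 1/2 := min_le_left _ _
    _ ≤ 1 := by norm_num
  have hc1pos : 0 < c1 := by rw [hc1def]; exact Real.rpow_pos_of_pos hε0 _
  have hc1le : c1 ≤ 1 := by
    rw [hc1def]; exact Real.rpow_le_one hε0.le hε1.le (by linarith)
  have hCs1 : (1:ℝ) ≤ Cs := by rw [hCsdef]; exact le_max_left _ _
  have hCspos : 0 < Cs := lt_of_lt_of_le one_pos hCs1
  refine ⟨2 * Cs, by linarith, c0 * c1 / 8, by positivity, ?_⟩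
  intro t ht
  obtain ⟨c, hcdef⟩ : ∃ c : ℝ, c = c0 * c1 / 8 := ⟨_, rfl⟩
  rw [← hcdef]
  have hcpos : 0 < c := by rw [hcdef]; positivity
  have hexp0 : (0:ℝ) < Real.exp (-c * t) := Real.exp_pos _
  -- pointwise key estimate
  have key : ∀ ξ : EuclideanSpace ℝ (Fin n), ε ≤ ‖ξ‖ →
      1 / 2 * ‖ξ‖ ^ (2 * δ + σ) * ‖w' t ξ‖ ^ 2
        + 1 / 2 * ‖ξ‖ ^ (2 * α + σ) * ‖w t ξ‖ ^ 2
      ≤ 2 * Cs * Real.exp (-c * t) * ((1 + ‖ξ‖ ^ 2) ^ (δ + σ / 2) * ‖w' 0 ξ‖ ^ 2)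
        + 2 * Cs * Real.exp (-c * t) * ((1 + ‖ξ‖ ^ 2) ^ (α + σ / 2) * ‖w 0 ξ‖ ^ 2) := by
    intro ξ hξ
    have hr : (0:ℝ) < ‖ξ‖ := lt_of_lt_of_le hε0 hξ
    obtain ⟨r, hrdef⟩ : ∃ r : ℝ, r = ‖ξ‖ := ⟨_, rfl⟩
    rw [← hrdef] at hξ hr ⊢
    obtain ⟨a, hadef⟩ : ∃ a : ℝ, a = 1 + r ^ (2*δ) := ⟨_, rfl⟩
    obtain ⟨b, hbdef⟩ : ∃ b : ℝ, b = r ^ (2*θ) := ⟨_, rfl⟩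
    obtain ⟨k, hkdef⟩ : ∃ k : ℝ, k = r ^ (2*α) := ⟨_, rfl⟩
    have ha1 : 1 ≤ a := by
      rw [hadef]; have := Real.rpow_nonneg hr.le (2*δ); linarith
    have hbpos : 0 < b := by rw [hbdef]; exact Real.rpow_pos_of_pos hr _
    have hkpos : 0 < k := by rw [hkdef]; exact Real.rpow_pos_of_pos hr _
    have hab : c0 * a ≤ b := by
      rcases le_total r 1 with h | h
      · have h1 : r ^ (2*δ) ≤ 1 := Real.rpow_le_one hr.le h (by positivity)
        have h2 : ε ^ (2*θ) ≤ r ^ (2*θ) := Real.rpow_le_rpow hε0.le hξ (by positivity)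
        have h3 : c0 ≤ ε ^ (2*θ) / 2 := by rw [hc0def]; exact min_le_right _ _
        have ha2 : a ≤ 2 := by rw [hadef]; linarith
        calc c0 * a ≤ (ε ^ (2*θ) / 2) * 2 :=
              mul_le_mul h3 ha2 (by linarith) (by positivity)
        _ = ε ^ (2*θ) := by ring
        _ ≤ b := by rw [hbdef]; exact h2
      · have h1 : r ^ (2*δ) ≤ r ^ (2*θ) :=
          Real.rpow_le_rpow_of_exponent_le h (by linarith)
        have h2 : (1:ℝ) ≤ r ^ (2*θ) := Real.one_le_rpow h (by positivity)
        have ha2 : a ≤ 2 * b := by rw [hadef, hbdef]; linarith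
        have hc0h : c0 ≤ 1/2 := by rw [hc0def]; exact min_le_left _ _
        have ha0 : 0 ≤ a := by linarith
        calc c0 * a ≤ (1/2) * (2*b) := mul_le_mul hc0h ha2 ha0 (by norm_num)
        _ = b := by ring
    have hbk : c1 * b ≤ k := by
      have h1 : ε ^ (2*(α-θ)) ≤ r ^ (2*(α-θ)) :=
        Real.rpow_le_rpow hε0.le hξ (by linarith)
      have h2 : r ^ (2*(α-θ)) * r ^ (2*θ) = r ^ (2*α) := by
        rw [← Real.rpow_add hr]; ring_nf
      rw [hc1def, hbdef, hkdef, ← h2]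
      exact mul_le_mul_of_nonneg_right h1 (Real.rpow_nonneg hr.le _)
    -- component functions and differential equation
    have hx1 : ∀ s ∈ Set.Ici (0:ℝ),
        HasDerivWithinAt (fun u => (w u ξ).re) ((w' s ξ).re) (Set.Ici 0) s := fun s hs =>
      (Complex.reCLM.hasFDerivAt).comp_hasDerivWithinAt s (hd1 ξ (hrdef ▸ hξ) s hs)
    have hy1 : ∀ s ∈ Set.Ici (0:ℝ),
        HasDerivWithinAt (fun u => (w u ξ).im) ((w' s ξ).im) (Set.Ici 0) s := fun s hs =>
      (Complex.imCLM.hasFDerivAt).comp_hasDerivWithinAt s (hd1 ξ (hrdef ▸ hξ) s hs)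
    have hx2 : ∀ s ∈ Set.Ici (0:ℝ),
        HasDerivWithinAt (fun u => (w' u ξ).re) ((w'' s ξ).re) (Set.Ici 0) s := fun s hs =>
      (Complex.reCLM.hasFDerivAt).comp_hasDerivWithinAt s (hd2 ξ (hrdef ▸ hξ) s hs)
    have hy2 : ∀ s ∈ Set.Ici (0:ℝ),
        HasDerivWithinAt (fun u => (w' u ξ).im) ((w'' s ξ).im) (Set.Ici 0) s := fun s hs =>
      (Complex.imCLM.hasFDerivAt).comp_hasDerivWithinAt s (hd2 ξ (hrdef ▸ hξ) s hs)
    have heqx : ∀ s ∈ Set.Ici (0:ℝ),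
        a * (w'' s ξ).re + b * (w' s ξ).re + k * (w s ξ).re = 0 := by
      intro s hs
      have h := congrArg Complex.re (heq ξ (hrdef ▸ hξ) s hs)
      simp only [Complex.add_re, Complex.mul_re, Complex.ofReal_re, Complex.ofReal_im,
        Complex.zero_re, zero_mul, sub_zero] at h
      rw [hadef, hbdef, hkdef, hrdef]
      linarith [h]
    have heqy : ∀ s ∈ Set.Ici (0:ℝ),
        a * (w'' s ξ).im + b * (w' s ξ).im + k * (w s ξ).im = 0 := by
      intro s hs
      have h := congrArg Complex.im (heq ξ (hrdef ▸ hξ) s hs)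
      simp only [Complex.add_im, Complex.mul_im, Complex.ofReal_re, Complex.ofReal_im,
        Complex.zero_im, zero_mul, add_zero] at h
      rw [hadef, hbdef, hkdef, hrdef]
      linarith [h]
    have hdec := aux_decay a b k c0 c1 ha1 hbpos hkpos hc0pos hc0le hc1pos hc1le hab hbk
      (fun u => (w u ξ).re) (fun u => (w' u ξ).re) (fun u => (w'' u ξ).re)
      (fun u => (w u ξ).im) (fun u => (w' u ξ).im) (fun u => (w'' u ξ).im)
      hx1 hx2 hy1 hy2 heqx heqy t ht
    -- translate abs^2 into re/im products
    have habs : ∀ z : ℂ, ‖z‖ ^ 2 = z.re * z.re + z.im * z.im := by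
      intro z; rw [Complex.sq_norm, Complex.normSq_apply]
    rw [habs, habs, habs, habs]
    obtain ⟨p, hpdef⟩ : ∃ p : ℝ, p = (w' t ξ).re * (w' t ξ).re + (w' t ξ).im * (w' t ξ).im := ⟨_, rfl⟩
    obtain ⟨u, hudef⟩ : ∃ u : ℝ, u = (w t ξ).re * (w t ξ).re + (w t ξ).im * (w t ξ).im := ⟨_, rfl⟩
    obtain ⟨p0, hp0def⟩ : ∃ p0 : ℝ, p0 = (w' 0 ξ).re * (w' 0 ξ).re + (w' 0 ξ).im * (w' 0 ξ).im := ⟨_, rfl⟩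
    obtain ⟨u0, hu0def⟩ : ∃ u0 : ℝ, u0 = (w 0 ξ).re * (w 0 ξ).re + (w 0 ξ).im * (w 0 ξ).im := ⟨_, rfl⟩
    rw [← hpdef, ← hudef, ← hp0def, ← hu0def]
    rw [← hpdef, ← hudef, ← hp0def, ← hu0def] at hdec
    have hp : 0 ≤ p := by rw [hpdef]; exact add_nonneg (mul_self_nonneg _) (mul_self_nonneg _)
    have hu : 0 ≤ u := by rw [hudef]; exact add_nonneg (mul_self_nonneg _) (mul_self_nonneg _)
    have hp0 : 0 ≤ p0 := by rw [hp0def]; exact add_nonneg (mul_self_nonneg _) (mul_self_nonneg _)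
    have hu0 : 0 ≤ u0 := by rw [hu0def]; exact add_nonneg (mul_self_nonneg _) (mul_self_nonneg _)
    have hrs0 : (0:ℝ) ≤ r ^ σ := Real.rpow_nonneg hr.le σ
    -- exponent splitting
    have e1 : r ^ (2*δ+σ) = r ^ (2*δ) * r ^ σ := Real.rpow_add hr _ _
    have e2 : r ^ (2*α+σ) = r ^ (2*α) * r ^ σ := Real.rpow_add hr _ _
    -- rpow of squares
    have hsq : ∀ e : ℝ, 0 ≤ e → (r:ℝ) ^ (2*e) = ((r^2 : ℝ)) ^ e := by
      intro e he
      rw [← Real.rpow_natCast r 2, ← Real.rpow_mul hr.le]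
      norm_num
    have h1r2 : (0:ℝ) < 1 + r^2 := by positivity
    -- r^σ ≤ Cs (1+r²)^{σ/2}
    have hrs : r ^ σ ≤ Cs * (1 + r^2) ^ (σ/2) := by
      have key0 : r ^ σ = ((r^2 : ℝ)) ^ (σ/2) := by
        rw [← Real.rpow_natCast r 2, ← Real.rpow_mul hr.le]
        congr 1
        push_cast
        ring
      rcases le_or_gt 0 σ with hσ | hσ
      · have h1 : ((r^2:ℝ)) ^ (σ/2) ≤ (1+r^2) ^ (σ/2) :=
          Real.rpow_le_rpow (by positivity) (by linarith) (by linarith)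
        have h2 : (1+r^2) ^ (σ/2) ≤ Cs * (1+r^2) ^ (σ/2) :=
          le_mul_of_one_le_left (Real.rpow_nonneg h1r2.le _) hCs1
        rw [key0]; linarith
      · have hε2r2 : ε^2 ≤ r^2 := by
          have h := mul_self_le_mul_self hε0.le hξ
          calc ε^2 = ε * ε := sq ε
          _ ≤ r * r := h
          _ = r^2 := (sq r).symm
        have hm : ε^2/(1+ε^2) * (1+r^2) ≤ r^2 := by
          rw [div_mul_eq_mul_div, div_le_iff₀ (by positivity)]
          linarith only [hε2r2, mul_le_mul_of_nonneg_left hε2r2 (sq_nonneg r)]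
        have h1 : ((r^2:ℝ)) ^ (σ/2) ≤ (ε^2/(1+ε^2) * (1+r^2)) ^ (σ/2) :=
          Real.rpow_le_rpow_of_nonpos (by positivity) hm (by linarith)
        rw [Real.mul_rpow (by positivity) (by positivity)] at h1
        have h2 : (ε^2/(1+ε^2)) ^ (σ/2) ≤ Cs := by rw [hCsdef]; exact le_max_right _ _
        have h3 : (ε^2/(1+ε^2)) ^ (σ/2) * (1+r^2) ^ (σ/2) ≤ Cs * (1+r^2) ^ (σ/2) :=
          mul_le_mul_of_nonneg_right h2 (Real.rpow_nonneg h1r2.le _)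
        rw [key0]; linarith
    -- a ≤ 2 (1+r²)^δ and k ≤ (1+r²)^α
    have ha2b : a ≤ 2 * (1+r^2) ^ δ := by
      have h1 : r ^ (2*δ) ≤ (1+r^2) ^ δ := by
        rw [hsq δ hδ]
        exact Real.rpow_le_rpow (by positivity) (by linarith) hδ
      have h2 : (1:ℝ) ≤ (1+r^2) ^ δ :=
        Real.one_le_rpow (by linarith only [sq_nonneg r]) hδ
      rw [hadef]; linarith
    have hk2b : k ≤ (1+r^2) ^ α := by
      rw [hkdef, hsq α hα]
      exact Real.rpow_le_rpow (by positivity) (by linarith) hα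
    have hra : r ^ σ * a ≤ 2 * Cs * (1+r^2) ^ (δ + σ/2) := by
      have h0 : 0 ≤ a := by linarith
      have h1 : r ^ σ * a ≤ (Cs * (1+r^2) ^ (σ/2)) * (2 * (1+r^2) ^ δ) :=
        mul_le_mul hrs ha2b h0 (by positivity)
      have h2 : (Cs * (1+r^2) ^ (σ/2)) * (2 * (1+r^2) ^ δ)
          = 2 * Cs * ((1+r^2) ^ (σ/2) * (1+r^2) ^ δ) := by ring
      have h3 : (1+r^2 : ℝ) ^ (σ/2) * (1+r^2) ^ δ = (1+r^2) ^ (δ + σ/2) := by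
        rw [← Real.rpow_add h1r2]; ring_nf
      rw [h2, h3] at h1; exact h1
    have hrk : r ^ σ * k ≤ Cs * (1+r^2) ^ (α + σ/2) := by
      have h1 : r ^ σ * k ≤ (Cs * (1+r^2) ^ (σ/2)) * ((1+r^2) ^ α) :=
        mul_le_mul hrs hk2b hkpos.le (by positivity)
      have h2 : (Cs * (1+r^2) ^ (σ/2)) * ((1+r^2) ^ α)
          = Cs * ((1+r^2) ^ (σ/2) * (1+r^2) ^ α) := by ring
      have h3 : (1+r^2 : ℝ) ^ (σ/2) * (1+r^2) ^ α = (1+r^2) ^ (α + σ/2) := by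
        rw [← Real.rpow_add h1r2]; ring_nf
      rw [h2, h3] at h1; exact h1
    -- final chain
    have hexpc : Real.exp (-(c0 * c1 / 8) * t) = Real.exp (-c * t) := by rw [hcdef]
    rw [hexpc] at hdec
    have hr2δ : r ^ (2*δ) ≤ a := by rw [hadef]; linarith
    have step1 : 1/2 * r ^ (2*δ+σ) * p + 1/2 * r ^ (2*α+σ) * u
        ≤ r ^ σ * (a/2 * p + k/2 * u) := by
      rw [e1, e2, ← hkdef]
      have d1 : r ^ (2*δ) * r ^ σ * p ≤ a * r ^ σ * p :=
        mul_le_mul_of_nonneg_right (mul_le_mul_of_nonneg_right hr2δ hrs0) hp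
      linarith only [d1]
    have step2 : r ^ σ * (a/2 * p + k/2 * u)
        ≤ r ^ σ * (2 * Real.exp (-c * t) * (a/2 * p0 + k/2 * u0)) :=
      mul_le_mul_of_nonneg_left hdec hrs0
    have step3 : r ^ σ * (2 * Real.exp (-c * t) * (a/2 * p0 + k/2 * u0))
        = Real.exp (-c * t) * ((r ^ σ * a) * p0) + Real.exp (-c * t) * ((r ^ σ * k) * u0) := by
      ring
    have m1 : Real.exp (-c * t) * ((r ^ σ * a) * p0)
        ≤ Real.exp (-c * t) * ((2 * Cs * (1+r^2) ^ (δ + σ/2)) * p0) :=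
      mul_le_mul_of_nonneg_left (mul_le_mul_of_nonneg_right hra hp0) hexp0.le
    have m2 : Real.exp (-c * t) * ((r ^ σ * k) * u0)
        ≤ Real.exp (-c * t) * ((Cs * (1+r^2) ^ (α + σ/2)) * u0) :=
      mul_le_mul_of_nonneg_left (mul_le_mul_of_nonneg_right hrk hu0) hexp0.le
    have m3 : Real.exp (-c * t) * ((Cs * (1+r^2) ^ (α + σ/2)) * u0)
        ≤ 2 * Cs * Real.exp (-c * t) * ((1+r^2) ^ (α + σ/2) * u0) := by
      have hq : 0 ≤ Real.exp (-c * t) * ((Cs * (1+r^2) ^ (α + σ/2)) * u0) := by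
        apply mul_nonneg hexp0.le
        exact mul_nonneg (mul_nonneg hCspos.le (Real.rpow_nonneg h1r2.le _)) hu0
      linarith only [hq]
    have m1' : Real.exp (-c * t) * ((2 * Cs * (1+r^2) ^ (δ + σ/2)) * p0)
        = 2 * Cs * Real.exp (-c * t) * ((1+r^2) ^ (δ + σ/2) * p0) := by ring
    calc 1/2 * r ^ (2*δ+σ) * p + 1/2 * r ^ (2*α+σ) * u
        ≤ r ^ σ * (a/2 * p + k/2 * u) := step1
    _ ≤ r ^ σ * (2 * Real.exp (-c * t) * (a/2 * p0 + k/2 * u0)) := step2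
    _ = Real.exp (-c * t) * ((r ^ σ * a) * p0) + Real.exp (-c * t) * ((r ^ σ * k) * u0) := step3
    _ ≤ 2 * Cs * Real.exp (-c * t) * ((1+r^2) ^ (δ + σ/2) * p0)
        + 2 * Cs * Real.exp (-c * t) * ((1+r^2) ^ (α + σ/2) * u0) := by
      rw [← m1']
      exact add_le_add m1 (le_trans m2 m3)
  -- measure-theoretic assembly
  have hS : MeasurableSet {ξ : EuclideanSpace ℝ (Fin n) | ε ≤ ‖ξ‖} :=
    measurableSet_le measurable_const measurable_norm
  have hCE : (0:ℝ) ≤ 2 * Cs * Real.exp (-c * t) := by positivity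
  obtain ⟨A1, hA1⟩ : ∃ A1 : EuclideanSpace ℝ (Fin n) → ℝ≥0∞, A1 = fun ξ =>
      ENNReal.ofReal (2 * Cs * Real.exp (-c * t) *
        ((1 + ‖ξ‖ ^ 2) ^ (δ + σ / 2) * ‖w' 0 ξ‖ ^ 2)) := ⟨_, rfl⟩
  obtain ⟨A0, hA0⟩ : ∃ A0 : EuclideanSpace ℝ (Fin n) → ℝ≥0∞, A0 = fun ξ =>
      ENNReal.ofReal (2 * Cs * Real.exp (-c * t) *
        ((1 + ‖ξ‖ ^ 2) ^ (α + σ / 2) * ‖w 0 ξ‖ ^ 2)) := ⟨_, rfl⟩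
  have hA1m : Measurable A1 := by
    rw [hA1]
    apply Measurable.ennreal_ofReal
    apply Measurable.const_mul
    apply Measurable.mul
    · exact (measurable_const.add (measurable_norm.pow measurable_const)).pow measurable_const
    · exact (continuous_norm.measurable.comp (hmeas 0).2).pow measurable_const
  have hA0m : Measurable A0 := by
    rw [hA0]
    apply Measurable.ennreal_ofReal
    apply Measurable.const_mul
    apply Measurable.mul
    · exact (measurable_const.add (measurable_norm.pow measurable_const)).pow measurable_const
    · exact (continuous_norm.measurable.comp (hmeas 0).1).pow measurable_const
  have step1 : (∫⁻ ξ in {ξ : EuclideanSpace ℝ (Fin n) | ε ≤ ‖ξ‖},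
      ENNReal.ofReal (1 / 2 * ‖ξ‖ ^ (2 * δ + σ) * ‖w' t ξ‖ ^ 2
        + 1 / 2 * ‖ξ‖ ^ (2 * α + σ) * ‖w t ξ‖ ^ 2))
      ≤ ∫⁻ ξ in {ξ : EuclideanSpace ℝ (Fin n) | ε ≤ ‖ξ‖}, (A1 ξ + A0 ξ) := by
    apply setLIntegral_mono' hS
    intro ξ hξ
    rw [hA1, hA0]
    have h1 : (0:ℝ) ≤ 2 * Cs * Real.exp (-c * t) *
        ((1 + ‖ξ‖ ^ 2) ^ (δ + σ / 2) * ‖w' 0 ξ‖ ^ 2) := by positivity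
    have h2 : (0:ℝ) ≤ 2 * Cs * Real.exp (-c * t) *
        ((1 + ‖ξ‖ ^ 2) ^ (α + σ / 2) * ‖w 0 ξ‖ ^ 2) := by positivity
    calc ENNReal.ofReal (1 / 2 * ‖ξ‖ ^ (2 * δ + σ) * ‖w' t ξ‖ ^ 2
        + 1 / 2 * ‖ξ‖ ^ (2 * α + σ) * ‖w t ξ‖ ^ 2)
        ≤ ENNReal.ofReal (2 * Cs * Real.exp (-c * t) *
            ((1 + ‖ξ‖ ^ 2) ^ (δ + σ / 2) * ‖w' 0 ξ‖ ^ 2)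
          + 2 * Cs * Real.exp (-c * t) *
            ((1 + ‖ξ‖ ^ 2) ^ (α + σ / 2) * ‖w 0 ξ‖ ^ 2)) :=
      ENNReal.ofReal_le_ofReal (key ξ hξ)
    _ = _ := ENNReal.ofReal_add h1 h2
  have step2 : (∫⁻ ξ in {ξ : EuclideanSpace ℝ (Fin n) | ε ≤ ‖ξ‖}, (A1 ξ + A0 ξ))
      = (∫⁻ ξ in {ξ : EuclideanSpace ℝ (Fin n) | ε ≤ ‖ξ‖}, A1 ξ)
        + ∫⁻ ξ in {ξ : EuclideanSpace ℝ (Fin n) | ε ≤ ‖ξ‖}, A0 ξ :=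
    lintegral_add_left (hA1m) _
  have hbound1 : (∫⁻ ξ in {ξ : EuclideanSpace ℝ (Fin n) | ε ≤ ‖ξ‖}, A1 ξ)
      ≤ ENNReal.ofReal (2 * Cs * Real.exp (-c * t)) *
        ∫⁻ ξ : EuclideanSpace ℝ (Fin n),
          ENNReal.ofReal ((1 + ‖ξ‖ ^ 2) ^ (δ + σ / 2) * ‖v1 ξ‖ ^ 2) := by
    have e1 : (∫⁻ ξ in {ξ : EuclideanSpace ℝ (Fin n) | ε ≤ ‖ξ‖}, A1 ξ)
        = ∫⁻ ξ in {ξ : EuclideanSpace ℝ (Fin n) | ε ≤ ‖ξ‖},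
            ENNReal.ofReal (2 * Cs * Real.exp (-c * t)) *
            ENNReal.ofReal ((1 + ‖ξ‖ ^ 2) ^ (δ + σ / 2) * ‖v1 ξ‖ ^ 2) := by
      apply setLIntegral_congr_fun hS
      intro ξ hξ
      simp only [hA1]
      rw [← ENNReal.ofReal_mul hCE, hw1 ξ hξ]
    rw [e1, lintegral_const_mul' _ _ ENNReal.ofReal_ne_top]
    exact mul_le_mul_right (setLIntegral_le_lintegral _ _) _
  have hbound0 : (∫⁻ ξ in {ξ : EuclideanSpace ℝ (Fin n) | ε ≤ ‖ξ‖}, A0 ξ)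
      ≤ ENNReal.ofReal (2 * Cs * Real.exp (-c * t)) *
        ∫⁻ ξ : EuclideanSpace ℝ (Fin n),
          ENNReal.ofReal ((1 + ‖ξ‖ ^ 2) ^ (α + σ / 2) * ‖v0 ξ‖ ^ 2) := by
    have e1 : (∫⁻ ξ in {ξ : EuclideanSpace ℝ (Fin n) | ε ≤ ‖ξ‖}, A0 ξ)
        = ∫⁻ ξ in {ξ : EuclideanSpace ℝ (Fin n) | ε ≤ ‖ξ‖},
            ENNReal.ofReal (2 * Cs * Real.exp (-c * t)) *
            ENNReal.ofReal ((1 + ‖ξ‖ ^ 2) ^ (α + σ / 2) * ‖v0 ξ‖ ^ 2) := by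
      apply setLIntegral_congr_fun hS
      intro ξ hξ
      simp only [hA0]
      rw [← ENNReal.ofReal_mul hCE, hw0 ξ hξ]
    rw [e1, lintegral_const_mul' _ _ ENNReal.ofReal_ne_top]
    exact mul_le_mul_right (setLIntegral_le_lintegral _ _) _
  calc (∫⁻ ξ in {ξ : EuclideanSpace ℝ (Fin n) | ε ≤ ‖ξ‖},
      ENNReal.ofReal (1 / 2 * ‖ξ‖ ^ (2 * δ + σ) * ‖w' t ξ‖ ^ 2
        + 1 / 2 * ‖ξ‖ ^ (2 * α + σ) * ‖w t ξ‖ ^ 2))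
      ≤ (∫⁻ ξ in {ξ : EuclideanSpace ℝ (Fin n) | ε ≤ ‖ξ‖}, A1 ξ)
        + ∫⁻ ξ in {ξ : EuclideanSpace ℝ (Fin n) | ε ≤ ‖ξ‖}, A0 ξ := step2 ▸ step1
  _ ≤ ENNReal.ofReal (2 * Cs * Real.exp (-c * t)) *
        (∫⁻ ξ : EuclideanSpace ℝ (Fin n),
          ENNReal.ofReal ((1 + ‖ξ‖ ^ 2) ^ (δ + σ / 2) * ‖v1 ξ‖ ^ 2))
      + ENNReal.ofReal (2 * Cs * Real.exp (-c * t)) *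
        (∫⁻ ξ : EuclideanSpace ℝ (Fin n),
          ENNReal.ofReal ((1 + ‖ξ‖ ^ 2) ^ (α + σ / 2) * ‖v0 ξ‖ ^ 2)) :=
    add_le_add hbound1 hbound0
  _ = _ := (mul_add _ _ _).symm
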